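/- Let a, b, c, d ∈ ℤ with gcd(a,b) = 1 and ad − bc ≠ 0, and let σ = {s·(a,b) + t·(c,d) : s, t ∈ ℚ, s ≥ 0, t ≥ 0} ⊆ ℚ². Then there exist e, f ∈ ℤ with f ≠ 0 and a 2×2 integer matrix M with determinant ±1 such that the linear map determined by M maps σ bijectively onto the cone σ_{e,f} = {s·(1,0) + t·(e,f) : s, t ∈ ℚ, s ≥ 0, t ≥ 0}. -/
import Mathlib


/-- For `e f : ℤ`, the cone `σ_{e,f} = {s•(1,0) + t•(e,f) : s,t ∈ ℚ, s ≥ 0, t ≥ 0} ⊆ ℚ²`. -/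
def coneQ (e f : ℤ) : Set (ℚ × ℚ) :=
  {p | ∃ s t : ℚ, 0 ≤ s ∧ 0 ≤ t ∧ p = s • ((1 : ℚ), (0 : ℚ)) + t • ((e : ℚ), (f : ℚ))}

/-- If `gcd(a,b) = 1` and `ad − bc ≠ 0`, then the cone spanned by `(a,b)` and `(c,d)` is
mapped bijectively onto some cone `σ_{e,f}` (with `f ≠ 0`) by a linear map given by a
`2×2` integer matrix of determinant `±1`. -/
theorem stmt2 (a b c d : ℤ) (hgcd : Int.gcd a b = 1) (hdet : a * d - b * c ≠ 0) :
    ∃ (e f : ℤ) (M : Matrix (Fin 2) (Fin 2) ℤ),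
      f ≠ 0 ∧ (M.det = 1 ∨ M.det = -1) ∧
      Set.BijOn
        (fun p : ℚ × ℚ =>
          ((M 0 0 : ℚ) * p.1 + (M 0 1 : ℚ) * p.2,
           (M 1 0 : ℚ) * p.1 + (M 1 1 : ℚ) * p.2))
        {p : ℚ × ℚ | ∃ s t : ℚ, 0 ≤ s ∧ 0 ≤ t ∧
          p = s • ((a : ℚ), (b : ℚ)) + t • ((c : ℚ), (d : ℚ))}
        (coneQ e f) := by
  obtain ⟨u, v, huv⟩ : ∃ u v : ℤ, a * u + b * v = 1 := by
    refine ⟨Int.gcdA a b, Int.gcdB a b, ?_⟩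
    have h := Int.gcd_eq_gcd_ab a b
    rw [hgcd] at h
    exact_mod_cast h.symm
  have huvQ : (a : ℚ) * u + (b : ℚ) * v = 1 := by exact_mod_cast congrArg (Int.cast : ℤ → ℚ) huv
  refine ⟨u * c + v * d, a * d - b * c, !![u, v; -b, a], hdet, ?_, ?_, ?_, ?_⟩
  · left
    simp [Matrix.det_fin_two_of]
    linarith
  · rintro p ⟨s, t, hs, ht, rfl⟩
    refine ⟨s, t, hs, ht, ?_⟩
    simp only [Matrix.cons_val', Matrix.cons_val_zero, Matrix.cons_val_one, Matrix.head_cons,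
      Matrix.empty_val', Matrix.cons_val_fin_one, Matrix.head_fin_const, Matrix.of_apply,
      Prod.smul_mk, Prod.mk_add_mk, smul_eq_mul, Prod.mk.injEq]
    push_cast
    constructor
    · linear_combination s * huvQ
    · ring
  · rintro p - q - h
    simp only [Matrix.cons_val', Matrix.cons_val_zero, Matrix.cons_val_one, Matrix.head_cons,
      Matrix.empty_val', Matrix.cons_val_fin_one, Matrix.head_fin_const, Matrix.of_apply,
      Prod.mk.injEq] at h
    obtain ⟨h1, h2⟩ := h
    push_cast at h1 h2
    apply Prod.ext
    · linear_combination (a : ℚ) * h1 - (v : ℚ) * h2 - (p.1 - q.1) * huvQ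
    · linear_combination (b : ℚ) * h1 + (u : ℚ) * h2 - (p.2 - q.2) * huvQ
  · rintro q ⟨s, t, hs, ht, rfl⟩
    refine ⟨s • ((a : ℚ), (b : ℚ)) + t • ((c : ℚ), (d : ℚ)), ⟨s, t, hs, ht, rfl⟩, ?_⟩
    simp only [Matrix.cons_val', Matrix.cons_val_zero, Matrix.cons_val_one, Matrix.head_cons,
      Matrix.empty_val', Matrix.cons_val_fin_one, Matrix.head_fin_const, Matrix.of_apply,
      Prod.smul_mk, Prod.mk_add_mk, smul_eq_mul, Prod.mk.injEq]
    push_cast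
    constructor
    · linear_combination s * huvQ
    · ring
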